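/- If a 2×2 positive semidefinite matrix N on Bob's qubit (system B of ℂ⁴⊗ℂ²⊗ℂ²) satisfies ⟨ψ|(I⊗N⊗I)|ψ'⟩ = 0 for all distinct ψ, ψ' in S₂, then N is diagonal in the computational basis; moreover using the pairs {|1⟩|0+1⟩|1⟩, |1⟩|0−1⟩|1⟩} one gets ⟨0|N|0⟩ = ⟨1|N|1⟩, so N is proportional to the identity. -/
import Mathlib


open scoped BigOperators ComplexOrder

noncomputable section

def e4 (i : Fin 4) : Fin 4 → ℂ := fun j => if j = i then 1 else 0
def dot4 (x y : Fin 4 → ℂ) : ℂ := ∑ i, star (x i) * y i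
def p4 (i j : Fin 4) : Fin 4 → ℂ := ((Real.sqrt 2 : ℂ))⁻¹ • (e4 i + e4 j)
def m4 (i j : Fin 4) : Fin 4 → ℂ := ((Real.sqrt 2 : ℂ))⁻¹ • (e4 i - e4 j)

def e2 (i : Fin 2) : Fin 2 → ℂ := fun j => if j = i then 1 else 0
def dot2 (x y : Fin 2 → ℂ) : ℂ := ∑ i, star (x i) * y i
def p2 : Fin 2 → ℂ := ((Real.sqrt 2 : ℂ))⁻¹ • (e2 0 + e2 1)
def m2 : Fin 2 → ℂ := ((Real.sqrt 2 : ℂ))⁻¹ • (e2 0 - e2 1)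

/-- The tripartite product states of `S₂ ⊂ ℂ⁴⊗ℂ²⊗ℂ²` as (A, B, C) factor triples. -/
def S2 : Fin 14 → (Fin 4 → ℂ) × (Fin 2 → ℂ) × (Fin 2 → ℂ) :=
  ![(e4 0, e2 0, p2), (e4 0, e2 0, m2),
    (e4 0, e2 1, p2), (e4 0, e2 1, m2),
    (p4 1 2, e2 0, e2 0), (m4 1 2, e2 0, e2 0),
    (e4 3, e2 0, e2 0), (e4 1, e2 1, e2 0), (e4 3, e2 1, e2 0),
    (e4 1, p2, e2 1), (e4 1, m2, e2 1),
    (p4 2 3, e2 0, e2 1), (m4 2 3, e2 0, e2 1),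
    (e4 3, e2 1, e2 1)]

/-- if a 2×2 PSD matrix `N` on Bob's qubit satisfies
`⟨ψ|(I⊗N⊗I)|ψ'⟩ = 0` for all distinct `ψ, ψ' ∈ S₂`, then `N` is diagonal with
`⟨0|N|0⟩ = ⟨1|N|1⟩`, hence proportional to the identity. -/
theorem stmt18 (N : Matrix (Fin 2) (Fin 2) ℂ) (hN : N.PosSemidef)
    (h : ∀ i j : Fin 14, i ≠ j →
      dot4 (S2 i).1 (S2 j).1 * dot2 (S2 i).2.1 (N.mulVec (S2 j).2.1)
        * dot2 (S2 i).2.2 (S2 j).2.2 = 0) :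
    (∀ i j : Fin 2, i ≠ j → N i j = 0) ∧ N 0 0 = N 1 1 ∧
      ∃ c : ℂ, N = c • (1 : Matrix (Fin 2) (Fin 2) ℂ) := by
  have hs : ((Real.sqrt 2 : ℂ)) ≠ 0 := by
    simp [Complex.ofReal_ne_zero]
  have h02 : dot4 (e4 0) (e4 0) * dot2 (e2 0) (N.mulVec (e2 1)) * dot2 p2 p2 = 0 :=
    h 0 2 (by decide)
  have h20 : dot4 (e4 0) (e4 0) * dot2 (e2 1) (N.mulVec (e2 0)) * dot2 p2 p2 = 0 :=
    h 2 0 (by decide)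
  have h910 : dot4 (e4 1) (e4 1) * dot2 p2 (N.mulVec m2) * dot2 (e2 1) (e2 1) = 0 :=
    h 9 10 (by decide)
  simp only [dot4, dot2, e4, e2, p2, m2, Matrix.mulVec, dotProduct,
    Fin.sum_univ_four, Fin.sum_univ_two, Pi.smul_apply, Pi.add_apply, Pi.sub_apply,
    if_neg (by decide : ¬(2:Fin 4)=0), if_neg (by decide : ¬(3:Fin 4)=0),
    if_neg (by decide : ¬(2:Fin 4)=1), if_neg (by decide : ¬(3:Fin 4)=1),
    smul_eq_mul] at h02 h20 h910
  norm_num at h02 h20 h910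
  have hd : N 0 0 = N 1 1 := by
    field_simp at h910
    linear_combination h910 + h02 - h20
  refine ⟨fun i j hij => ?_, hd, N 0 0, ?_⟩
  · fin_cases i <;> fin_cases j <;> simp_all
  · ext i j
    fin_cases i <;> fin_cases j <;>
      simp [Matrix.one_apply, h02, h20, hd]

end
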